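/- For every probability measure μ on ℝ and every integer m ≥ 2, there exists a positive integer k ≤ m such that E_μ[g(kx)] ≤ (log 2)/(log m). -/
import Mathlib

open MeasureTheory

noncomputable def sawtooth (x : ℝ) : ℝ := x + ⌊(1:ℝ)/2 - x⌋

lemma sawtooth_le (x : ℝ) : sawtooth x ≤ 1/2 := by
  have := Int.floor_le ((1:ℝ)/2 - x)
  unfold sawtooth; linarith

lemma lt_sawtooth (x : ℝ) : -(1/2) < sawtooth x := by
  have := Int.lt_floor_add_one ((1:ℝ)/2 - x)
  unfold sawtooth; linarith

lemma sawtooth_add_int (x : ℝ) (n : ℤ) : sawtooth (x + n) = sawtooth x := by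
  unfold sawtooth
  have : (1:ℝ)/2 - (x + n) = (1/2 - x) + (-n : ℤ) := by push_cast; ring
  rw [this, Int.floor_add_intCast]
  push_cast; ring

/-- The auxiliary potential function. -/
noncomputable def hfun (x : ℝ) : ℝ :=
  if 0 < sawtooth x then 1 - sawtooth x else - sawtooth x

lemma hfun_nonneg (x : ℝ) : 0 ≤ hfun x := by
  unfold hfun
  split_ifs with h
  · have := sawtooth_le x; linarith
  · linarith [not_lt.mp h]

lemma hfun_le_one (x : ℝ) : hfun x ≤ 1 := by
  unfold hfun
  split_ifs with h
  · linarith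
  · have := lt_sawtooth x; linarith

lemma sawtooth_two_mul (x : ℝ) : sawtooth (2 * x) = sawtooth (2 * sawtooth x) := by
  have h : 2 * x = 2 * sawtooth x + ((-2 * ⌊(1:ℝ)/2 - x⌋ : ℤ) : ℝ) := by
    unfold sawtooth; push_cast; ring
  rw [h, sawtooth_add_int]

lemma key_identity (x : ℝ) : sawtooth x = hfun x - hfun (2 * x) := by
  set s := sawtooth x with hs
  have hsle : s ≤ 1/2 := sawtooth_le x
  have hslt : -(1/2) < s := lt_sawtooth x
  have h2 : sawtooth (2 * x) = 2 * s + ⌊(1:ℝ)/2 - 2 * s⌋ := by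
    rw [sawtooth_two_mul x]; rfl
  rcases le_or_gt s (-(1/4)) with hc | hc
  · -- s ∈ (-1/2, -1/4] : floor = 1, sawtooth(2x) = 2s + 1 ∈ (0, 1/2]
    have hf : ⌊(1:ℝ)/2 - 2 * s⌋ = 1 := by
      apply Int.floor_eq_iff.mpr
      constructor <;> push_cast <;> linarith
    have h2x : sawtooth (2 * x) = 2 * s + 1 := by rw [h2, hf]; norm_num
    have hpos : 0 < sawtooth (2 * x) := by rw [h2x]; linarith
    have hneg : ¬ (0 < s) := by linarith
    unfold hfun
    rw [if_neg (by rw [← hs]; exact hneg), if_pos hpos, h2x, ← hs]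
    ring
  rcases le_or_gt s (1/4) with hc2 | hc2
  · -- s ∈ (-1/4, 1/4] : floor = 0, sawtooth(2x) = 2s
    have hf : ⌊(1:ℝ)/2 - 2 * s⌋ = 0 := by
      apply Int.floor_eq_iff.mpr
      constructor <;> push_cast <;> linarith
    have h2x : sawtooth (2 * x) = 2 * s := by rw [h2, hf]; norm_num
    unfold hfun
    rcases lt_or_ge 0 s with hsp | hsn
    · rw [if_pos (by rw [← hs]; exact hsp), if_pos (by rw [h2x]; linarith), h2x, ← hs]
      ring
    · rw [if_neg (by rw [← hs]; linarith), if_neg (by rw [h2x]; intro hh; linarith), h2x, ← hs]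
      ring
  · -- s ∈ (1/4, 1/2] : floor = -1, sawtooth(2x) = 2s - 1 ≤ 0
    have hf : ⌊(1:ℝ)/2 - 2 * s⌋ = -1 := by
      apply Int.floor_eq_iff.mpr
      constructor <;> push_cast <;> linarith
    have h2x : sawtooth (2 * x) = 2 * s - 1 := by rw [h2, hf]; push_cast; ring
    unfold hfun
    rw [if_pos (by rw [← hs]; linarith), if_neg (by rw [h2x]; intro hh; linarith), h2x, ← hs]
    ring

lemma sawtooth_eq (x : ℝ) : sawtooth x = 1/2 - Int.fract (1/2 - x) := by
  unfold sawtooth Int.fract; ring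

lemma measurable_sawtooth : Measurable sawtooth := by
  have h : sawtooth = fun x : ℝ => 1/2 - Int.fract (1/2 - x) := funext sawtooth_eq
  rw [h]
  exact measurable_const.sub (measurable_fract.comp (measurable_const.sub measurable_id))

lemma measurable_hfun : Measurable hfun := by
  unfold hfun
  exact Measurable.ite (measurableSet_lt measurable_const measurable_sawtooth)
    (measurable_const.sub measurable_sawtooth) measurable_sawtooth.neg

lemma integrable_aux (μ : Measure ℝ) [IsProbabilityMeasure μ] (f : ℝ → ℝ)
    (hf : Measurable f) (C : ℝ) (hb : ∀ x, |f x| ≤ C) (c : ℝ) :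
    Integrable (fun x => f (c * x)) μ := by
  refine ⟨(hf.comp (measurable_const_mul c)).aestronglyMeasurable, ?_⟩
  exact HasFiniteIntegral.of_bounded (C := C) (ae_of_all _ fun x => by
    simpa [Real.norm_eq_abs] using hb (c * x))

lemma integrable_saw (μ : Measure ℝ) [IsProbabilityMeasure μ] (c : ℝ) :
    Integrable (fun x => sawtooth (c * x)) μ :=
  integrable_aux μ sawtooth measurable_sawtooth 1
    (fun x => abs_le.mpr ⟨by linarith [lt_sawtooth x], by linarith [sawtooth_le x]⟩) c

lemma integrable_hfun (μ : Measure ℝ) [IsProbabilityMeasure μ] (c : ℝ) :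
    Integrable (fun x => hfun (c * x)) μ :=
  integrable_aux μ hfun measurable_hfun 1
    (fun x => abs_le.mpr ⟨by linarith [hfun_nonneg x], hfun_le_one x⟩) c

theorem stmt_10 (m : ℕ) (hm : 2 ≤ m) (μ : Measure ℝ) [IsProbabilityMeasure μ] :
    ∃ k : ℕ, 1 ≤ k ∧ k ≤ m ∧
      (∫ x, sawtooth (k * x) ∂μ) ≤ Real.log 2 / Real.log m := by
  set r := Nat.log 2 m with hr
  set F : ℕ → ℝ := fun j => ∫ x, hfun ((2:ℝ)^j * x) ∂μ with hF
  have step : ∀ j : ℕ, (∫ x, sawtooth ((2:ℝ)^j * x) ∂μ) = F j - F (j+1) := by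
    intro j
    rw [hF]
    rw [← integral_sub (integrable_hfun μ _) (integrable_hfun μ _)]
    refine integral_congr_ae (ae_of_all _ fun x => ?_)
    dsimp only
    rw [key_identity ((2:ℝ)^j * x)]
    congr 2
    ring
  have tele : ∑ j ∈ Finset.range (r+1), (∫ x, sawtooth ((2:ℝ)^j * x) ∂μ)
      = F 0 - F (r+1) := by
    calc ∑ j ∈ Finset.range (r+1), (∫ x, sawtooth ((2:ℝ)^j * x) ∂μ)
        = ∑ j ∈ Finset.range (r+1), (F j - F (j+1)) := by
          exact Finset.sum_congr rfl fun j _ => step j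
      _ = F 0 - F (r+1) := Finset.sum_range_sub' F (r+1)
  have hF0 : F 0 ≤ 1 := by
    have h1 : (∫ x, hfun ((2:ℝ)^0 * x) ∂μ) ≤ ∫ _x, (1:ℝ) ∂μ :=
      integral_mono (integrable_hfun μ _) (integrable_const 1) (fun x => hfun_le_one _)
    simpa [hF] using h1
  have hFend : 0 ≤ F (r+1) := integral_nonneg fun x => hfun_nonneg _
  have hsum : ∑ j ∈ Finset.range (r+1), (∫ x, sawtooth ((2:ℝ)^j * x) ∂μ)
      ≤ ∑ _j ∈ Finset.range (r+1), (1:ℝ)/(r+1) := by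
    rw [tele, Finset.sum_const, Finset.card_range]
    have : ((r:ℝ)+1) ≠ 0 := by positivity
    rw [nsmul_eq_mul]
    push_cast
    rw [mul_one_div, div_self (by positivity)]
    linarith
  obtain ⟨j, hjmem, hj⟩ := Finset.exists_le_of_sum_le ⟨0, by simp⟩ hsum
  have hjr : j ≤ r := Nat.lt_succ_iff.mp (Finset.mem_range.mp hjmem)
  refine ⟨2^j, Nat.one_le_two_pow, ?_, ?_⟩
  · calc 2^j ≤ 2^r := Nat.pow_le_pow_right (by norm_num) hjr
      _ ≤ m := Nat.pow_log_le_self 2 (by omega)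
  · have hcast : ((2^j : ℕ) : ℝ) = (2:ℝ)^j := by push_cast; ring
    rw [hcast]
    refine hj.trans ?_
    -- 1/(r+1) ≤ log 2 / log m
    have hm1 : (1:ℝ) < m := by exact_mod_cast (by omega : 1 < m)
    have hlogm : 0 < Real.log m := Real.log_pos hm1
    have hlog2 : 0 < Real.log 2 := Real.log_pos (by norm_num)
    have hmlt : (m:ℝ) < 2^(r+1) := by
      exact_mod_cast Nat.lt_pow_succ_log_self (by norm_num) m
    have hle : Real.log m ≤ ((r:ℝ)+1) * Real.log 2 := by
      calc Real.log m ≤ Real.log (2^(r+1)) :=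
            Real.log_le_log (by positivity) hmlt.le
        _ = ((r:ℝ)+1) * Real.log 2 := by
            rw [Real.log_pow]; push_cast; ring
    rw [div_le_div_iff₀ (by positivity) hlogm]
    calc 1 * Real.log m ≤ ((r:ℝ)+1) * Real.log 2 := by linarith
      _ = Real.log 2 * ((r:ℝ)+1) := by ring
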